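/- Let Γ : (0,∞)³ → (0,∞) be monotonically increasing, homogeneous of degree 1 in (V, W), and subhomogeneous in S (Γ(αS, V, W) ≤ α·Γ(S, V, W) for α ≥ 1). Let S, V, W : (a,b) → (0,∞) be resources on a block spanning (a,b), with S_max ≤ ξ·S_min, V_max ≤ ξ·V_min, W_max ≤ ξ·W_min for ξ ≥ 1 (where min/max denote inf/sup of the resource over (a,b)). Then for any recorded space value s_b with S_min ≤ s_b ≤ S_max: Γ(s_b, ∫_a^b V, ∫_a^b W) ≥ (1/ξ²)·∫_a^b Γ(S(t), V(t), W(t)) dt. -/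

import Mathlib

open MeasureTheory

/-- Infimum of a resource over a block timespan (a,b). -/
noncomputable def blockInf (f : ℝ → ℝ) (a b : ℝ) : ℝ := sInf (f '' Set.Ioo a b)

/-- Supremum of a resource over a block timespan (a,b). -/
noncomputable def blockSup (f : ℝ → ℝ) (a b : ℝ) : ℝ := sSup (f '' Set.Ioo a b)

/-- Per-block honest bound: for Γ monotone, homogeneous in (V,W) and
subhomogeneous in S, and ξ-smooth resources on a block (a,b), any recorded
space value s_b between the inf and sup of S satisfies
Γ(s_b, ∫V, ∫W) ≥ (1/ξ²)·∫ Γ(S(t),V(t),W(t)) dt. -/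
theorem stmt_13 (Γ : ℝ → ℝ → ℝ → ℝ)
    (hmono : ∀ s v w s' v' w' : ℝ, 0 < s → 0 < v → 0 < w →
      s ≤ s' → v ≤ v' → w ≤ w' → Γ s v w ≤ Γ s' v' w')
    (hhom : ∀ s v w α : ℝ, 0 < s → 0 < v → 0 < w → 0 < α →
      Γ s (α * v) (α * w) = α * Γ s v w)
    (hsub : ∀ s v w α : ℝ, 0 < s → 0 < v → 0 < w → 1 ≤ α →
      Γ (α * s) v w ≤ α * Γ s v w)
    (a b : ℝ) (hab : a < b)
    (S V W : ℝ → ℝ)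
    (hSpos : ∀ t ∈ Set.Ioo a b, 0 < S t)
    (hVpos : ∀ t ∈ Set.Ioo a b, 0 < V t)
    (hWpos : ∀ t ∈ Set.Ioo a b, 0 < W t)
    (hSinf : 0 < blockInf S a b) (hVinf : 0 < blockInf V a b)
    (hWinf : 0 < blockInf W a b)
    (hSbd : BddAbove (S '' Set.Ioo a b)) (hVbd : BddAbove (V '' Set.Ioo a b))
    (hWbd : BddAbove (W '' Set.Ioo a b))
    (hVint : IntervalIntegrable V volume a b)
    (hWint : IntervalIntegrable W volume a b)
    (hΓint : IntervalIntegrable (fun t => Γ (S t) (V t) (W t)) volume a b)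
    (ξ : ℝ) (hξ : 1 ≤ ξ)
    (hSsm : blockSup S a b ≤ ξ * blockInf S a b)
    (hVsm : blockSup V a b ≤ ξ * blockInf V a b)
    (hWsm : blockSup W a b ≤ ξ * blockInf W a b)
    (sb : ℝ) (hsb₁ : blockInf S a b ≤ sb) (hsb₂ : sb ≤ blockSup S a b) :
    (1 / ξ ^ 2) * (∫ t in a..b, Γ (S t) (V t) (W t)) ≤
      Γ sb (∫ t in a..b, V t) (∫ t in a..b, W t) := by
  have hξ0 : (0:ℝ) < ξ := lt_of_lt_of_le one_pos hξ
  have hba : (0:ℝ) < b - a := sub_pos.mpr hab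
  set Sm := blockInf S a b
  set Vm := blockInf V a b
  set Wm := blockInf W a b
  have hsb0 : 0 < sb := lt_of_lt_of_le hSinf hsb₁
  -- bounds on functions
  have hSle : ∀ t ∈ Set.Ioo a b, S t ≤ ξ * sb := by
    intro t ht
    have h1 : S t ≤ blockSup S a b :=
      le_csSup hSbd ⟨t, ht, rfl⟩
    calc S t ≤ ξ * Sm := h1.trans hSsm
      _ ≤ ξ * sb := by nlinarith
  have hVle : ∀ t ∈ Set.Ioo a b, V t ≤ ξ * Vm := fun t ht =>
    (le_csSup hVbd ⟨t, ht, rfl⟩).trans hVsm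
  have hWle : ∀ t ∈ Set.Ioo a b, W t ≤ ξ * Wm := fun t ht =>
    (le_csSup hWbd ⟨t, ht, rfl⟩).trans hWsm
  have hVge : ∀ t ∈ Set.Ioo a b, Vm ≤ V t := fun t ht =>
    csInf_le ⟨0, fun x ⟨u, hu, hux⟩ => (hVpos u hu).le.trans hux.le⟩ ⟨t, ht, rfl⟩
  have hWge : ∀ t ∈ Set.Ioo a b, Wm ≤ W t := fun t ht =>
    csInf_le ⟨0, fun x ⟨u, hu, hux⟩ => (hWpos u hu).le.trans hux.le⟩ ⟨t, ht, rfl⟩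
  -- pointwise bound on Γ
  have hpt : ∀ t ∈ Set.Ioo a b, Γ (S t) (V t) (W t) ≤ ξ ^ 2 * Γ sb Vm Wm := by
    intro t ht
    have h1 : Γ (S t) (V t) (W t) ≤ Γ (ξ * sb) (ξ * Vm) (ξ * Wm) :=
      hmono _ _ _ _ _ _ (hSpos t ht) (hVpos t ht) (hWpos t ht)
        (hSle t ht) (hVle t ht) (hWle t ht)
    have h2 : Γ (ξ * sb) (ξ * Vm) (ξ * Wm) = ξ * Γ (ξ * sb) Vm Wm :=
      hhom _ _ _ _ (by positivity) hVinf hWinf hξ0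
    have h3 : Γ (ξ * sb) Vm Wm ≤ ξ * Γ sb Vm Wm :=
      hsub _ _ _ _ hsb0 hVinf hWinf hξ
    nlinarith
  -- rewrite interval integrals as set integrals over Ioo
  have hIoo : MeasurableSet (Set.Ioo a b) := measurableSet_Ioo
  have hvol : (volume (Set.Ioo a b)).toReal = b - a := by
    rw [Real.volume_Ioo, ENNReal.toReal_ofReal hba.le]
  have key : ∀ f : ℝ → ℝ, (∫ t in a..b, f t) = ∫ t in Set.Ioo a b, f t := by
    intro f
    rw [intervalIntegral.integral_of_le hab.le, MeasureTheory.integral_Ioc_eq_integral_Ioo]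
  have hΓon : IntegrableOn (fun t => Γ (S t) (V t) (W t)) (Set.Ioo a b) volume :=
    hΓint.1.mono_set Set.Ioo_subset_Ioc_self
  have hVon : IntegrableOn V (Set.Ioo a b) volume :=
    hVint.1.mono_set Set.Ioo_subset_Ioc_self
  have hWon : IntegrableOn W (Set.Ioo a b) volume :=
    hWint.1.mono_set Set.Ioo_subset_Ioc_self
  have hintΓ : (∫ t in a..b, Γ (S t) (V t) (W t)) ≤ (b - a) * (ξ ^ 2 * Γ sb Vm Wm) := by
    rw [key]
    calc (∫ t in Set.Ioo a b, Γ (S t) (V t) (W t))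
        ≤ ∫ _ in Set.Ioo a b, ξ ^ 2 * Γ sb Vm Wm :=
          setIntegral_mono_on hΓon (integrableOn_const (by
            rw [Real.volume_Ioo]; exact ENNReal.ofReal_lt_top.ne)) hIoo hpt
      _ = (b - a) * (ξ ^ 2 * Γ sb Vm Wm) := by
          rw [setIntegral_const, measureReal_def, hvol, smul_eq_mul]
  have hintV : (b - a) * Vm ≤ ∫ t in a..b, V t := by
    rw [key]
    calc (b - a) * Vm = ∫ _ in Set.Ioo a b, Vm := by
          rw [setIntegral_const, measureReal_def, hvol, smul_eq_mul]
      _ ≤ ∫ t in Set.Ioo a b, V t :=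
          setIntegral_mono_on (integrableOn_const (by
            rw [Real.volume_Ioo]; exact ENNReal.ofReal_lt_top.ne)) hVon hIoo hVge
  have hintW : (b - a) * Wm ≤ ∫ t in a..b, W t := by
    rw [key]
    calc (b - a) * Wm = ∫ _ in Set.Ioo a b, Wm := by
          rw [setIntegral_const, measureReal_def, hvol, smul_eq_mul]
      _ ≤ ∫ t in Set.Ioo a b, W t :=
          setIntegral_mono_on (integrableOn_const (by
            rw [Real.volume_Ioo]; exact ENNReal.ofReal_lt_top.ne)) hWon hIoo hWge
  have hfin : (b - a) * Γ sb Vm Wm ≤ Γ sb (∫ t in a..b, V t) (∫ t in a..b, W t) := by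
    have := hmono sb ((b - a) * Vm) ((b - a) * Wm) sb _ _ hsb0 (by positivity)
      (by positivity) le_rfl hintV hintW
    rwa [hhom sb Vm Wm (b - a) hsb0 hVinf hWinf hba] at this
  have hξ2 : (0:ℝ) < ξ ^ 2 := by positivity
  calc (1 / ξ ^ 2) * (∫ t in a..b, Γ (S t) (V t) (W t))
      ≤ (1 / ξ ^ 2) * ((b - a) * (ξ ^ 2 * Γ sb Vm Wm)) := by
        apply mul_le_mul_of_nonneg_left hintΓ (by positivity)
    _ = (b - a) * Γ sb Vm Wm := by field_simp
    _ ≤ _ := hfin
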